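/- Let S be an uncountable set of countable limit ordinals carrying a ladder system ⟨x_α : α ∈ S⟩. Then no suborder of the Baumgartner type (S, <_lex) is an Aronszajn line; indeed, every uncountable T ⊆ S contains an uncountable subset which is scattered in the order induced by <_lex. -/

import Mathlib

/-- The first uncountable ordinal, `ω₁`. -/
noncomputable def ω1 : Ordinal := (Cardinal.aleph 1).ord

/-- `x` is a ladder system on the set `S` of countable limit ordinals: each `α ∈ S` is a
countable limit ordinal and `x α : ℕ → Ordinal` is strictly increasing with range contained
and cofinal in `α`. -/
def IsLadderOn (S : Set Ordinal) (x : Ordinal → ℕ → Ordinal) : Prop :=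
  ∀ α ∈ S, α < ω1 ∧ Order.IsSuccLimit α ∧ StrictMono (x α) ∧ (∀ n : ℕ, x α n < α) ∧
    ∀ β < α, ∃ n : ℕ, β < x α n

/-- The lexicographic order associated to a ladder system: `α <lex β` iff at the least `n`
where `x α` and `x β` differ we have `x α n < x β n`. -/
def LexLt (x : Ordinal → ℕ → Ordinal) (α β : Ordinal) : Prop :=
  ∃ n : ℕ, (∀ m < n, x α m = x β m) ∧ x α n < x β n

/-- A set `A` is scattered with respect to the relation `r` if there is no map of `ℚ`
into `A` which is strictly increasing from `<` to `r`. -/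
def RelScatteredOn (r : Ordinal → Ordinal → Prop) (A : Set Ordinal) : Prop :=
  ¬ ∃ f : ℚ → Ordinal, (∀ q : ℚ, f q ∈ A) ∧ ∀ p q : ℚ, p < q → r (f p) (f q)

/-- The set of elements of `T` whose ladder agrees with that of `α` on the first `n` steps. -/
def Eset (x : Ordinal → ℕ → Ordinal) (T : Set Ordinal) (n : ℕ) (α : Ordinal) : Set Ordinal :=
  {β ∈ T | ∀ m < n, x β m = x α m}

lemma Eset_subset (x : Ordinal → ℕ → Ordinal) (T : Set Ordinal) (n : ℕ) (α : Ordinal) :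
    Eset x T n α ⊆ T := fun _ hβ => hβ.1

lemma Eset_zero (x : Ordinal → ℕ → Ordinal) (T : Set Ordinal) (α : Ordinal) :
    Eset x T 0 α = T := by
  ext β; simp [Eset]

lemma mem_Eset_self (x : Ordinal → ℕ → Ordinal) {T : Set Ordinal} (n : ℕ) {α : Ordinal}
    (h : α ∈ T) : α ∈ Eset x T n α := ⟨h, fun _ _ => rfl⟩

lemma Eset_succ_subset (x : Ordinal → ℕ → Ordinal) (T : Set Ordinal) (n : ℕ) (α : Ordinal) :
    Eset x T (n + 1) α ⊆ Eset x T n α :=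
  fun β hβ => ⟨hβ.1, fun m hm => hβ.2 m (Nat.lt_succ_of_lt hm)⟩

/-- If the image of `A` under `g` is countable, there is a countable subset of `A` meeting
every fiber of `g` on `A`. -/
lemma exists_countable_section (A : Set Ordinal) (g : Ordinal → Ordinal)
    (h : (g '' A).Countable) :
    ∃ D : Set Ordinal, D ⊆ A ∧ D.Countable ∧ ∀ a ∈ A, ∃ d ∈ D, g d = g a := by
  classical
  haveI : Countable ↥(g '' A) := h.to_subtype
  have hsel : ∀ c : ↥(g '' A), ∃ a, a ∈ A ∧ g a = (c : Ordinal) := fun c => c.2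
  choose f hfA hfg using hsel
  refine ⟨Set.range f, ?_, Set.countable_range f, ?_⟩
  · rintro d ⟨c, rfl⟩; exact hfA c
  · intro a ha
    exact ⟨f ⟨g a, ⟨a, ha, rfl⟩⟩, ⟨_, rfl⟩, hfg _⟩

/-- There is no strictly increasing map from `ℚ` to the ordinals. -/
lemma no_rat_strictMono (f : ℚ → Ordinal) (hf : ∀ p q : ℚ, p < q → f p < f q) : False := by
  have hdec : ∀ i : ℕ, f (-((i + 1 : ℕ) : ℚ)) < f (-(i : ℚ)) := by
    intro i; apply hf; push_cast; linarith
  obtain ⟨y, ⟨i, rfl⟩, hmin⟩ :=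
    Ordinal.lt_wf.has_min (Set.range fun i : ℕ => f (-(i : ℚ))) ⟨_, ⟨0, rfl⟩⟩
  exact hmin _ ⟨i + 1, rfl⟩ (hdec i)

/-- No suborder of a Baumgartner type is an Aronszajn line: every uncountable subset of `S`
contains an uncountable subset which is scattered in the induced lexicographic order. -/
theorem baumgartner_no_aronszajn (S : Set Ordinal) (x : Ordinal → ℕ → Ordinal)
    (hS : ¬ S.Countable) (hx : IsLadderOn S x)
    (T : Set Ordinal) (hTS : T ⊆ S) (hT : ¬ T.Countable) :
    ∃ U ⊆ T, ¬ U.Countable ∧ RelScatteredOn (LexLt x) U := by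
  classical
  by_cases hcase : ∃ n : ℕ, ∃ α ∈ T, ¬ (Eset x T n α).Countable ∧
      ¬ ((fun β => x β n) '' Eset x T n α).Countable
  · -- Case 1: some "big node" has uncountably many values at its level.
    obtain ⟨n, α, hαT, _hbig, hval⟩ := hcase
    set A := Eset x T n α with hA
    set g : Ordinal → Ordinal := fun β => x β n with hg
    have hsel : ∀ c : ↥(g '' A), ∃ a, a ∈ A ∧ g a = (c : Ordinal) := fun c => c.2
    choose f hfA hfg using hsel
    refine ⟨Set.range f, ?_, ?_, ?_⟩
    · rintro u ⟨c, rfl⟩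
      exact Eset_subset x T n α (hfA c)
    · -- uncountability of the range
      intro hUc
      apply hval
      have : g '' A ⊆ g '' Set.range f := by
        rintro c ⟨a, ha, rfl⟩
        exact ⟨f ⟨g a, ⟨a, ha, rfl⟩⟩, ⟨_, rfl⟩, hfg _⟩
      exact ((hUc.image g).mono this)
    · -- scatteredness
      rintro ⟨F, hFU, hFmono⟩
      apply no_rat_strictMono (fun q => g (F q))
      intro p q hpq
      obtain ⟨k, hk1, hk2⟩ := hFmono p q hpq
      obtain ⟨cp, hcp⟩ := hFU p
      obtain ⟨cq, hcq⟩ := hFU q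
      have hFpA : F p ∈ A := by rw [← hcp]; exact hfA cp
      have hFqA : F q ∈ A := by rw [← hcq]; exact hfA cq
      have hne : g (F p) ≠ g (F q) := by
        intro he
        have : (cp : Ordinal) = (cq : Ordinal) := by
          rw [← hfg cp, ← hfg cq, hcp, hcq]; exact he
        have hpq' : F p = F q := by rw [← hcp, ← hcq]; congr 1; exact Subtype.ext this
        rw [hpq'] at hk2
        exact lt_irrefl _ hk2
      have hkn : ¬ k < n := by
        intro hlt
        rw [hFpA.2 k hlt, hFqA.2 k hlt] at hk2
        exact lt_irrefl _ hk2
      have hkn' : ¬ n < k := fun hlt => hne (hk1 n hlt)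
      have : k = n := le_antisymm (not_lt.mp hkn') (not_lt.mp hkn)
      show x (F p) n < x (F q) n
      rw [← this]
      exact hk2
  · -- Case 2: derive a contradiction — `T` would be countable.
    push_neg at hcase
    exfalso
    apply hT
    have hTne : T.Nonempty := by
      rcases T.eq_empty_or_nonempty with h | h
      · exact absurd (h ▸ Set.countable_empty) hT
      · exact h
    -- Step A: a countable family of representatives for the big nodes at each level.
    have hrep : ∀ n : ℕ, ∃ D : Set Ordinal, D.Countable ∧ D ⊆ T ∧
        ∀ α ∈ T, ¬ (Eset x T n α).Countable → ∃ δ ∈ D, ∀ m < n, x α m = x δ m := by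
      intro n
      induction n with
      | zero =>
          exact ⟨{hTne.choose}, Set.countable_singleton _,
            by simpa using hTne.choose_spec,
            fun α hα _ => ⟨hTne.choose, rfl, by simp⟩⟩
      | succ n ih =>
          obtain ⟨D, hDc, hDT, hDcov⟩ := ih
          have hsel : ∀ δ : ↥D, ∃ D' : Set Ordinal, D' ⊆ Eset x T n δ ∧ D'.Countable ∧
              ∀ a ∈ Eset x T n (δ : Ordinal), ∃ d ∈ D', x d n = x a n := by
            intro δ
            by_cases hb : (Eset x T n (δ : Ordinal)).Countable
            · exact ⟨Eset x T n δ, subset_rfl, hb, fun a ha => ⟨a, ha, rfl⟩⟩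
            · obtain ⟨D', h1, h2, h3⟩ := exists_countable_section (Eset x T n δ)
                (fun β => x β n) (hcase n δ (hDT δ.2) hb)
              exact ⟨D', h1, h2, h3⟩
          choose Dsel hDsel1 hDsel2 hDsel3 using hsel
          haveI : Countable ↥D := hDc.to_subtype
          refine ⟨⋃ δ : ↥D, Dsel δ, Set.countable_iUnion hDsel2, ?_, ?_⟩
          · exact Set.iUnion_subset fun δ =>
              (hDsel1 δ).trans (Eset_subset x T n δ)
          · intro α hα hbig
            have hbign : ¬ (Eset x T n α).Countable :=
              fun h => hbig (h.mono (Eset_succ_subset x T n α))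
            obtain ⟨δ, hδD, hδm⟩ := hDcov α hα hbign
            have hαE : α ∈ Eset x T n δ := ⟨hα, hδm⟩
            obtain ⟨d, hdD', hdn⟩ := hDsel3 ⟨δ, hδD⟩ α hαE
            refine ⟨d, Set.mem_iUnion.mpr ⟨⟨δ, hδD⟩, hdD'⟩, ?_⟩
            intro m hm
            rcases Nat.lt_succ_iff_lt_or_eq.mp hm with h | h
            · have hd : d ∈ Eset x T n δ := hDsel1 ⟨δ, hδD⟩ hdD'
              rw [hδm m h, ← hd.2 m h]
            · rw [h, hdn]
    choose Dfam hDfamC hDfamT hDfamCov using hrep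
    -- The countable set of labels of big nodes.
    set C : Set Ordinal := ⋃ n : ℕ, (fun δ => x δ n) '' Dfam (n + 1) with hC
    have hCc : C.Countable :=
      Set.countable_iUnion fun n => (hDfamC (n + 1)).image _
    have hmemC : ∀ α ∈ T, ∀ n : ℕ, ¬ (Eset x T (n + 1) α).Countable → x α n ∈ C := by
      intro α hα n hbig
      obtain ⟨δ, hδD, hδm⟩ := hDfamCov (n + 1) α hα hbig
      exact Set.mem_iUnion.mpr ⟨n, ⟨δ, hδD, (hδm n (Nat.lt_succ_self n)).symm⟩⟩
    -- The set of points all of whose prefixes are big.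
    set A : Set Ordinal := {α | α ∈ T ∧ ∀ n : ℕ, ¬ (Eset x T n α).Countable} with hAdef
    -- A is countable: it maps injectively into C.
    have hLad : ∀ β ∈ A, ∀ γ < β, ∃ c ∈ C, γ < c ∧ c < β := by
      intro β hβ γ hγ
      obtain ⟨-, -, -, h4, h5⟩ := hx β (hTS hβ.1)
      obtain ⟨n, hn⟩ := h5 γ hγ
      exact ⟨x β n, hmemC β hβ.1 n (hβ.2 (n + 1)), hn, h4 n⟩
    have hAc : A.Countable := by
      set A' : Set Ordinal := {α ∈ A | ∃ β ∈ A, α < β} with hA'def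
      have hA'c : A'.Countable := by
        have hne : ∀ α ∈ A', {c ∈ C | α ≤ c}.Nonempty := by
          rintro α ⟨hαA, β, hβA, hαβ⟩
          obtain ⟨c, hcC, h1, _⟩ := hLad β hβA α hαβ
          exact ⟨c, hcC, h1.le⟩
        classical
        set g : Ordinal → Ordinal := fun α => sInf {c ∈ C | α ≤ c} with hgdef
        have hgC : ∀ α ∈ A', g α ∈ C := fun α hα => (csInf_mem (hne α hα)).1
        have hgge : ∀ α ∈ A', α ≤ g α := fun α hα => (csInf_mem (hne α hα)).2
        have hinj : Set.InjOn g A' := by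
          have hmono : ∀ α₁ ∈ A', ∀ α₂ ∈ A', α₁ < α₂ → g α₁ < g α₂ := by
            intro α₁ h₁ α₂ h₂ hlt
            obtain ⟨c, hcC, hc1, hc2⟩ := hLad α₂ h₂.1 α₁ hlt
            have h1 : g α₁ ≤ c := csInf_le' ⟨hcC, hc1.le⟩
            exact (h1.trans_lt hc2).trans_le (hgge α₂ h₂)
          intro a ha b hb hab
          by_contra hne'
          rcases lt_or_gt_of_ne hne' with h | h
          · exact absurd hab (hmono a ha b hb h).ne
          · exact absurd hab.symm (hmono b hb a ha h).ne
        exact Set.MapsTo.countable_of_injOn (fun α hα => hgC α hα) hinj hCc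
      have hsub : (A \ A').Subsingleton := by
        intro a ha b hb
        by_contra hne'
        rcases lt_or_gt_of_ne hne' with h | h
        · exact ha.2 ⟨ha.1, b, hb.1, h⟩
        · exact hb.2 ⟨hb.1, a, ha.1, h⟩
      have : A ⊆ A' ∪ (A \ A') := fun a ha => by
        by_cases h : a ∈ A'
        · exact Or.inl h
        · exact Or.inr ⟨ha, h⟩
      exact (hA'c.union hsub.countable).mono this
    -- T \ A is countable.
    have hTAc : (T \ A).Countable := by
      have hcover : T \ A ⊆ ⋃ n : ℕ,
          {α ∈ T | ¬ (Eset x T n α).Countable ∧ (Eset x T (n + 1) α).Countable} := by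
        rintro α ⟨hαT', hαA⟩
        have hex : ∃ n, (Eset x T n α).Countable := by
          by_contra h
          push_neg at h
          exact hαA ⟨hαT', h⟩
        have hn₀c := Nat.find_spec hex
        have hn₀pos : Nat.find hex ≠ 0 := by
          intro h
          rw [h, Eset_zero] at hn₀c
          exact hT hn₀c
        obtain ⟨m, hm⟩ := Nat.exists_eq_succ_of_ne_zero hn₀pos
        refine Set.mem_iUnion.mpr ⟨m, hαT', ?_, ?_⟩
        · exact Nat.find_min hex (by omega)
        · rw [hm] at hn₀c; exact hn₀c
      refine (Set.Countable.mono hcover ?_ : _)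
      apply Set.countable_iUnion
      intro n
      -- each level-n piece is countable
      haveI : Countable ↥(Dfam n) := (hDfamC n).to_subtype
      have hGsub : {α ∈ T | ¬ (Eset x T n α).Countable ∧ (Eset x T (n + 1) α).Countable} ⊆
          ⋃ δ : ↥(Dfam n), {α ∈ Eset x T n (δ : Ordinal) | (Eset x T (n + 1) α).Countable} := by
        rintro α ⟨hαT', hbig, hsmall⟩
        obtain ⟨δ, hδD, hδm⟩ := hDfamCov n α hαT' hbig
        exact Set.mem_iUnion.mpr ⟨⟨δ, hδD⟩, ⟨hαT', hδm⟩, hsmall⟩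
      refine Set.Countable.mono hGsub (Set.countable_iUnion ?_)
      intro δ
      by_cases hb : (Eset x T n (δ : Ordinal)).Countable
      · exact hb.mono fun a ha => ha.1
      · have hVc : ((fun β => x β n) '' Eset x T n (δ : Ordinal)).Countable :=
          hcase n δ (hDfamT n δ.2) hb
        haveI : Countable ↥((fun β => x β n) '' Eset x T n (δ : Ordinal)) := hVc.to_subtype
        have hsub2 : {α ∈ Eset x T n (δ : Ordinal) | (Eset x T (n + 1) α).Countable} ⊆
            ⋃ c : ↥((fun β => x β n) '' Eset x T n (δ : Ordinal)),
              {α ∈ Eset x T n (δ : Ordinal) | x α n = (c : Ordinal) ∧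
                (Eset x T (n + 1) α).Countable} := by
          rintro α ⟨hαE, hsmall⟩
          exact Set.mem_iUnion.mpr ⟨⟨x α n, ⟨α, hαE, rfl⟩⟩, hαE, rfl, hsmall⟩
        refine Set.Countable.mono hsub2 (Set.countable_iUnion ?_)
        intro c
        rcases Set.eq_empty_or_nonempty
            {α ∈ Eset x T n (δ : Ordinal) | x α n = (c : Ordinal) ∧
              (Eset x T (n + 1) α).Countable} with he | ⟨α₀, hα₀⟩
        · rw [he]; exact Set.countable_empty
        · refine hα₀.2.2.mono ?_
          rintro β ⟨hβE, hβc, -⟩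
          refine ⟨hβE.1, ?_⟩
          intro m hm
          rcases Nat.lt_succ_iff_lt_or_eq.mp hm with h | h
          · rw [hβE.2 m h, ← hα₀.1.2 m h]
          · rw [h, hβc, ← hα₀.2.1]
    -- conclude
    have : T ⊆ A ∪ (T \ A) := fun a ha => by
      by_cases h : a ∈ A
      · exact Or.inl h
      · exact Or.inr ⟨ha, h⟩
    exact (hAc.union hTAc).mono this
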